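/- Let M = SE₂(3) × se(3) and let B = SE₂(3) ⋉ se(3) be the group of pairs (C, γ) with C ∈ SE₂(3), γ ∈ se(3) and product (C_X, γ_X)(C_Y, γ_Y) = (C_X C_Y, γ_X + B(C_X) γ_Y B(C_X)⁻¹), where B(C) ∈ SE(3) is formed from the rotation block and first translation column of C. Then the map φ : B × M → M defined by φ((C, γ), (P, Bᵦ)) = (P C, B(C)⁻¹ (Bᵦ − γ) B(C)) is a transitive right group action of B on M. -/
import Mathlib


open Matrix

noncomputable section

abbrev V3 := Fin 3 → ℝ
abbrev Mat3 := Matrix (Fin 3) (Fin 3) ℝ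
abbrev Mat4 := Matrix (Fin 4) (Fin 4) ℝ
abbrev Mat5 := Matrix (Fin 5) (Fin 5) ℝ

/-- `SO(3)`: real 3×3 matrices with `Rᵀ R = I` and `det R = 1`. -/
def SO3 (A : Mat3) : Prop := Aᵀ * A = 1 ∧ A.det = 1

/-- The 5×5 block matrix `[[A, a, b], [0, 1, 0], [0, 0, 1]]`. -/
def se23mk (A : Mat3) (a b : V3) : Mat5 :=
  Matrix.of fun i j =>
    if hi : (i : ℕ) < 3 then
      if hj : (j : ℕ) < 3 then A ⟨(i : ℕ), hi⟩ ⟨(j : ℕ), hj⟩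
      else if (j : ℕ) = 3 then a ⟨(i : ℕ), hi⟩ else b ⟨(i : ℕ), hi⟩
    else if (i : ℕ) = (j : ℕ) then 1 else 0

/-- `SE₂(3)`: 5×5 block matrices `[[A, a, b], [0, 1, 0], [0, 0, 1]]` with `A ∈ SO(3)`. -/
def SE23 (C : Mat5) : Prop := ∃ (A : Mat3) (a b : V3), SO3 A ∧ C = se23mk A a b

/-- `x^∧`: the 3×3 skew-symmetric matrix with `x^∧ y = x × y`. -/
def wedge (x : V3) : Mat3 :=
  !![0, -x 2, x 1; x 2, 0, -x 0; -x 1, x 0, 0]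

/-- The 4×4 block matrix `[[ω^∧, u], [0, 0]]`. -/
def se3algMk (ω u : V3) : Mat4 :=
  Matrix.of fun i j =>
    if hi : (i : ℕ) < 3 then
      if hj : (j : ℕ) < 3 then wedge ω ⟨(i : ℕ), hi⟩ ⟨(j : ℕ), hj⟩
      else u ⟨(i : ℕ), hi⟩
    else 0

/-- `se(3)`: 4×4 block matrices `[[ω^∧, u], [0, 0]]` with `ω, u ∈ ℝ³`. -/
def se3Alg (M : Mat4) : Prop := ∃ ω u : V3, M = se3algMk ω u

/-- `B(C) ∈ SE(3)`: the 4×4 matrix formed from the rotation block `A` and the first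
translation column `a` (the velocity column) of `C ∈ SE₂(3)`. -/
def Bproj (C : Mat5) : Mat4 :=
  Matrix.of fun i j =>
    if hi : (i : ℕ) < 3 then
      if hj : (j : ℕ) < 3 then
        C (Fin.castLE (by norm_num) i) (Fin.castLE (by norm_num) j)
      else C (Fin.castLE (by norm_num) i) 3
    else if (i : ℕ) = (j : ℕ) then 1 else 0

/-- The product of the Semi-Direct Bias group `B = SE₂(3) ⋉ se(3)`:
`(C_X, γ_X)(C_Y, γ_Y) = (C_X C_Y, γ_X + B(C_X) γ_Y B(C_X)⁻¹)`. -/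
def sdMul (X : Mat5 × Mat4) (Y : Mat5 × Mat4) : Mat5 × Mat4 :=
  (X.1 * Y.1, X.2 + Bproj X.1 * Y.2 * (Bproj X.1)⁻¹)

/-- The action `φ((C, γ), (P, Bᵦ)) = (P C, B(C)⁻¹ (Bᵦ − γ) B(C))` of
`B = SE₂(3) ⋉ se(3)` on `M = SE₂(3) × se(3)`. -/
def phiSD (C : Mat5) (γ : Mat4) (P : Mat5) (Bb : Mat4) : Mat5 × Mat4 :=
  (P * C, (Bproj C)⁻¹ * (Bb - γ) * Bproj C)


section Aux

set_option maxHeartbeats 1000000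

/-- The 4×4 block matrix `[[A, a], [0, 1]]` (an SE(3)-shaped matrix). -/
def se3mk (A : Mat3) (a : V3) : Mat4 :=
  Matrix.of fun i j =>
    if hi : (i : ℕ) < 3 then
      if hj : (j : ℕ) < 3 then A ⟨(i : ℕ), hi⟩ ⟨(j : ℕ), hj⟩
      else a ⟨(i : ℕ), hi⟩
    else if (i : ℕ) = (j : ℕ) then 1 else 0

lemma v40 : ((0:Fin 4):ℕ) = 0 := rfl
lemma v41 : ((1:Fin 4):ℕ) = 1 := rfl
lemma v42 : ((2:Fin 4):ℕ) = 2 := rfl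
lemma v43 : ((3:Fin 4):ℕ) = 3 := rfl
lemma v50 : ((0:Fin 5):ℕ) = 0 := rfl
lemma v51 : ((1:Fin 5):ℕ) = 1 := rfl
lemma v52 : ((2:Fin 5):ℕ) = 2 := rfl
lemma v53 : ((3:Fin 5):ℕ) = 3 := rfl
lemma v54 : ((4:Fin 5):ℕ) = 4 := rfl

lemma se3mk_mul (A A' : Mat3) (a a' : V3) :
    se3mk A a * se3mk A' a' = se3mk (A * A') (A.mulVec a' + a) := by
  ext i j
  fin_cases i <;> fin_cases j <;>
    simp [se3mk, Matrix.mul_apply, Fin.sum_univ_four, Matrix.mulVec, dotProduct,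
      Fin.sum_univ_three, v40, v41, v42, v43]

lemma se23mk_mul (A A' : Mat3) (a b a' b' : V3) :
    se23mk A a b * se23mk A' a' b' = se23mk (A * A') (A.mulVec a' + a) (A.mulVec b' + b) := by
  ext i j
  fin_cases i <;> fin_cases j <;>
    simp [se23mk, Matrix.mul_apply, Fin.sum_univ_five, Matrix.mulVec, dotProduct,
      Fin.sum_univ_three, v50, v51, v52, v53, v54]

lemma Bproj_se23mk (A : Mat3) (a b : V3) : Bproj (se23mk A a b) = se3mk A a := by
  ext i j
  fin_cases i <;> fin_cases j <;>
    simp [Bproj, se23mk, se3mk, Fin.castLE, v40, v41, v42, v43, v50, v51, v52, v53, v54]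

lemma se23mk_one : se23mk 1 0 0 = (1 : Mat5) := by
  ext i j
  fin_cases i <;> fin_cases j <;>
    simp [se23mk, Matrix.one_apply, v50, v51, v52, v53, v54, Fin.ext_iff]

lemma se3mk_one : se3mk 1 0 = (1 : Mat4) := by
  ext i j
  fin_cases i <;> fin_cases j <;>
    simp [se3mk, Matrix.one_apply, v40, v41, v42, v43, Fin.ext_iff]

lemma Bproj_one : Bproj (1 : Mat5) = 1 := by
  rw [← se23mk_one, Bproj_se23mk, se3mk_one]

lemma SO3.mul_self_transpose {A : Mat3} (h : SO3 A) : A * Aᵀ = 1 :=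
  mul_eq_one_comm.mp h.1

lemma SO3.one : SO3 (1 : Mat3) := by constructor <;> simp

lemma SO3.mul {A B : Mat3} (hA : SO3 A) (hB : SO3 B) : SO3 (A * B) := by
  constructor
  · rw [Matrix.transpose_mul]
    calc Bᵀ * Aᵀ * (A * B) = Bᵀ * (Aᵀ * A) * B := by noncomm_ring
    _ = 1 := by rw [hA.1, mul_one, hB.1]
  · rw [Matrix.det_mul, hA.2, hB.2, one_mul]

lemma SO3.transpose {A : Mat3} (h : SO3 A) : SO3 Aᵀ := by
  refine ⟨?_, by rw [Matrix.det_transpose]; exact h.2⟩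
  rw [Matrix.transpose_transpose]; exact h.mul_self_transpose

lemma SO3.adjugate {A : Mat3} (h : SO3 A) : Matrix.adjugate A = Aᵀ := by
  have h1 : A * Matrix.adjugate A = 1 := by
    rw [Matrix.mul_adjugate, h.2]; simp
  calc Matrix.adjugate A = (Aᵀ * A) * Matrix.adjugate A := by rw [h.1, one_mul]
  _ = Aᵀ * (A * Matrix.adjugate A) := by rw [mul_assoc]
  _ = Aᵀ := by rw [h1, mul_one]

/-- General polynomial identity: `Mᵀ (ω^∧) M = ((adj M) ω)^∧`. -/
lemma wedge_conj_gen (M : Mat3) (ω : V3) :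
    Mᵀ * wedge ω * M = wedge ((Matrix.adjugate M).mulVec ω) := by
  rw [show M = !![M 0 0, M 0 1, M 0 2; M 1 0, M 1 1, M 1 2; M 2 0, M 2 1, M 2 2] from by
    ext i j; fin_cases i <;> fin_cases j <;> rfl]
  ext i j
  fin_cases i <;> fin_cases j <;>
    simp [wedge, Matrix.adjugate_fin_three, Matrix.mul_apply, Fin.sum_univ_three,
      Matrix.mulVec, dotProduct, Matrix.transpose] <;> ring

lemma wedge_conj {A : Mat3} (h : SO3 A) (ω : V3) :
    Aᵀ * wedge ω * A = wedge (Aᵀ.mulVec ω) := by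
  rw [wedge_conj_gen, h.adjugate]

/-- The 4×4 block matrix `[[W, u], [0, 0]]`. -/
def blk (W : Mat3) (u : V3) : Mat4 :=
  Matrix.of fun i j =>
    if hi : (i : ℕ) < 3 then
      if hj : (j : ℕ) < 3 then W ⟨(i : ℕ), hi⟩ ⟨(j : ℕ), hj⟩
      else u ⟨(i : ℕ), hi⟩
    else 0

lemma se3algMk_eq_blk (ω u : V3) : se3algMk ω u = blk (wedge ω) u := rfl

lemma blk_mul_se3mk (W : Mat3) (u : V3) (A : Mat3) (a : V3) :
    blk W u * se3mk A a = blk (W * A) (W.mulVec a + u) := by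
  ext i j
  fin_cases i <;> fin_cases j <;>
    simp [blk, se3mk, Matrix.mul_apply, Fin.sum_univ_four, Matrix.mulVec, dotProduct,
      Fin.sum_univ_three, v40, v41, v42, v43]

lemma se3mk_mul_blk (A : Mat3) (a : V3) (W : Mat3) (u : V3) :
    se3mk A a * blk W u = blk (A * W) (A.mulVec u) := by
  ext i j
  fin_cases i <;> fin_cases j <;>
    simp [blk, se3mk, Matrix.mul_apply, Fin.sum_univ_four, Matrix.mulVec, dotProduct,
      Fin.sum_univ_three, v40, v41, v42, v43]

lemma se3mk_inv {A : Mat3} (h : SO3 A) (a : V3) :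
    (se3mk A a)⁻¹ = se3mk Aᵀ (-(Aᵀ.mulVec a)) := by
  apply Matrix.inv_eq_left_inv
  rw [se3mk_mul, h.1]
  rw [show Aᵀ.mulVec a + -(Aᵀ.mulVec a) = 0 by abel, se3mk_one]

lemma se3mk_mul_inv {A : Mat3} (h : SO3 A) (a : V3) :
    se3mk A a * (se3mk A a)⁻¹ = 1 := by
  rw [se3mk_inv h, se3mk_mul, h.mul_self_transpose, Matrix.mulVec_neg,
    Matrix.mulVec_mulVec, h.mul_self_transpose]
  simp [se3mk_one]

lemma se3mk_inv_mul {A : Mat3} (h : SO3 A) (a : V3) :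
    (se3mk A a)⁻¹ * se3mk A a = 1 := by
  rw [se3mk_inv h, se3mk_mul, h.1]
  rw [show Aᵀ.mulVec a + -(Aᵀ.mulVec a) = 0 by abel, se3mk_one]

lemma conj_alg {A : Mat3} (h : SO3 A) (a ω u : V3) :
    (se3mk A a)⁻¹ * se3algMk ω u * se3mk A a
      = se3algMk (Aᵀ.mulVec ω) (Aᵀ.mulVec ((wedge ω).mulVec a + u)) := by
  rw [se3mk_inv h, se3algMk_eq_blk, se3algMk_eq_blk, se3mk_mul_blk, blk_mul_se3mk]
  rw [show Aᵀ * wedge ω * A = wedge (Aᵀ.mulVec ω) from wedge_conj h ω]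
  rw [Matrix.mulVec_add, ← Matrix.mulVec_mulVec]

lemma se3mk_inv' {A : Mat3} (h : SO3 A) (a : V3) :
    (se3mk Aᵀ (-(Aᵀ.mulVec a)))⁻¹ = se3mk A a := by
  rw [se3mk_inv h.transpose, Matrix.transpose_transpose, Matrix.mulVec_neg,
    Matrix.mulVec_mulVec, h.mul_self_transpose, neg_neg, Matrix.one_mulVec]

lemma conj_alg' {A : Mat3} (h : SO3 A) (a ω u : V3) :
    se3Alg (se3mk A a * se3algMk ω u * (se3mk A a)⁻¹) := by
  rw [se3mk_inv h, ← se3mk_inv' h a, conj_alg h.transpose]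
  exact ⟨_, _, rfl⟩

lemma se3algMk_sub (ω u ω' u' : V3) :
    se3algMk ω u - se3algMk ω' u' = se3algMk (ω - ω') (u - u') := by
  ext i j
  fin_cases i <;> fin_cases j <;>
    simp [se3algMk, wedge, v40, v41, v42, v43] <;> ring

end Aux

/-- `φ` is a transitive right group action of the Semi-Direct Bias group
`B = SE₂(3) ⋉ se(3)` on `M = SE₂(3) × se(3)`. -/
theorem stmt11 :
    -- φ maps M into M
    (∀ (C : Mat5) (γ : Mat4) (P : Mat5) (Bb : Mat4),
      SE23 C → se3Alg γ → SE23 P → se3Alg Bb →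
      SE23 (phiSD C γ P Bb).1 ∧ se3Alg (phiSD C γ P Bb).2) ∧
    -- identity axiom: φ((I₅, 0), ξ) = ξ
    (∀ (P : Mat5) (Bb : Mat4), phiSD 1 0 P Bb = (P, Bb)) ∧
    -- compatibility axiom: φ(X, φ(Y, ξ)) = φ(Y X, ξ)
    (∀ (CX : Mat5) (γX : Mat4) (CY : Mat5) (γY : Mat4) (P : Mat5) (Bb : Mat4),
      SE23 CX → se3Alg γX → SE23 CY → se3Alg γY → SE23 P → se3Alg Bb →
      phiSD CX γX (phiSD CY γY P Bb).1 (phiSD CY γY P Bb).2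
        = phiSD (sdMul (CY, γY) (CX, γX)).1 (sdMul (CY, γY) (CX, γX)).2 P Bb) ∧
    -- transitivity
    (∀ (P₁ : Mat5) (B₁ : Mat4) (P₂ : Mat5) (B₂ : Mat4),
      SE23 P₁ → se3Alg B₁ → SE23 P₂ → se3Alg B₂ →
      ∃ (C : Mat5) (γ : Mat4), SE23 C ∧ se3Alg γ ∧
        phiSD C γ P₁ B₁ = (P₂, B₂)) := by
  refine ⟨?_, ?_, ?_, ?_⟩
  · -- closure
    rintro C γ P Bb ⟨A, a, b, hA, rfl⟩ ⟨ω, u, rfl⟩ ⟨A', a', b', hA', rfl⟩ ⟨ω', u', rfl⟩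
    constructor
    · exact ⟨A' * A, _, _, hA'.mul hA, se23mk_mul A' A a' b' a b⟩
    · show se3Alg ((Bproj (se23mk A a b))⁻¹ * (se3algMk ω' u' - se3algMk ω u) *
        Bproj (se23mk A a b))
      rw [Bproj_se23mk, se3algMk_sub, conj_alg hA]
      exact ⟨_, _, rfl⟩
  · -- identity
    intro P Bb
    simp [phiSD, Bproj_one]
  · -- compatibility
    rintro CX γX CY γY P Bb ⟨AX, aX, bX, hAX, rfl⟩ _ ⟨AY, aY, bY, hAY, rfl⟩ _ _ _
    unfold phiSD sdMul
    simp only [Prod.mk.injEq]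
    refine ⟨by rw [mul_assoc], ?_⟩
    rw [se23mk_mul, Bproj_se23mk, Bproj_se23mk, Bproj_se23mk, ← se3mk_mul]
    set BX := se3mk AX aX with hBXdef
    set BY := se3mk AY aY with hBYdef
    have hY : BY⁻¹ * BY = 1 := se3mk_inv_mul hAY aY
    have key : BY⁻¹ * (Bb - (γY + BY * γX * BY⁻¹)) * BY
        = BY⁻¹ * (Bb - γY) * BY - γX := by
      have e1 : BY⁻¹ * (BY * γX * BY⁻¹) * BY = γX := by
        calc BY⁻¹ * (BY * γX * BY⁻¹) * BY
            = (BY⁻¹ * BY) * γX * (BY⁻¹ * BY) := by noncomm_ring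
        _ = γX := by rw [hY]; simp
      calc BY⁻¹ * (Bb - (γY + BY * γX * BY⁻¹)) * BY
          = BY⁻¹ * (Bb - γY) * BY - BY⁻¹ * (BY * γX * BY⁻¹) * BY := by noncomm_ring
      _ = _ := by rw [e1]
    calc BX⁻¹ * (BY⁻¹ * (Bb - γY) * BY - γX) * BX
        = BX⁻¹ * (BY⁻¹ * (Bb - (γY + BY * γX * BY⁻¹)) * BY) * BX := by rw [key]
    _ = (BX⁻¹ * BY⁻¹) * (Bb - (γY + BY * γX * BY⁻¹)) * (BY * BX) := by noncomm_ring
    _ = (BY * BX)⁻¹ * (Bb - (γY + BY * γX * BY⁻¹)) * (BY * BX) := by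
        rw [Matrix.mul_inv_rev]
  · -- transitivity
    rintro P₁ B₁ P₂ B₂ ⟨A₁, a₁, b₁, h₁, rfl⟩ ⟨ω₁, u₁, rfl⟩ ⟨A₂, a₂, b₂, h₂, rfl⟩ ⟨ω₂, u₂, rfl⟩
    have hSO : SO3 (A₁ᵀ * A₂) := h₁.transpose.mul h₂
    set C : Mat5 := se23mk A₁ᵀ (-(A₁ᵀ.mulVec a₁)) (-(A₁ᵀ.mulVec b₁)) * se23mk A₂ a₂ b₂
      with hCdef
    have hCform : C = se23mk (A₁ᵀ * A₂) (A₁ᵀ.mulVec a₂ + -(A₁ᵀ.mulVec a₁))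
        (A₁ᵀ.mulVec b₂ + -(A₁ᵀ.mulVec b₁)) := se23mk_mul _ _ _ _ _ _
    have hBC : Bproj C = se3mk (A₁ᵀ * A₂) (A₁ᵀ.mulVec a₂ + -(A₁ᵀ.mulVec a₁)) := by
      rw [hCform, Bproj_se23mk]
    set γ : Mat4 := se3algMk ω₁ u₁ - Bproj C * se3algMk ω₂ u₂ * (Bproj C)⁻¹ with hγdef
    refine ⟨C, γ, ⟨_, _, _, hSO, hCform⟩, ?_, ?_⟩
    · have hconj : se3Alg (Bproj C * se3algMk ω₂ u₂ * (Bproj C)⁻¹) := by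
        rw [hBC]; exact conj_alg' hSO _ ω₂ u₂
      obtain ⟨w, v, hwv⟩ := hconj
      rw [hγdef, hwv, se3algMk_sub]
      exact ⟨_, _, rfl⟩
    · unfold phiSD
      simp only [Prod.mk.injEq]
      constructor
      · rw [hCdef, ← mul_assoc, se23mk_mul, h₁.mul_self_transpose]
        rw [show A₁.mulVec (-(A₁ᵀ.mulVec a₁)) + a₁ = 0 by
          rw [Matrix.mulVec_neg, Matrix.mulVec_mulVec, h₁.mul_self_transpose,
            Matrix.one_mulVec]; abel]
        rw [show A₁.mulVec (-(A₁ᵀ.mulVec b₁)) + b₁ = 0 by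
          rw [Matrix.mulVec_neg, Matrix.mulVec_mulVec, h₁.mul_self_transpose,
            Matrix.one_mulVec]; abel]
        rw [se23mk_one, one_mul]
      · rw [hγdef, sub_sub_cancel]
        have hi : (Bproj C)⁻¹ * Bproj C = 1 := by rw [hBC]; exact se3mk_inv_mul hSO _
        calc (Bproj C)⁻¹ * (Bproj C * se3algMk ω₂ u₂ * (Bproj C)⁻¹) * Bproj C
            = ((Bproj C)⁻¹ * Bproj C) * se3algMk ω₂ u₂ * ((Bproj C)⁻¹ * Bproj C) := by
              noncomm_ring
        _ = se3algMk ω₂ u₂ := by rw [hi]; simp
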